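/- With p'(x) = exp((2λ/μ²)·1/(1−x²)) and p(x) = ∫₀ˣ p'(y) dy on (−1,1), the limit lim_{x→1⁻} p(x)/(p'(x)(1−x²)²) exists and equals μ²/(4λ). -/

import Mathlib

open Set Filter

lemma my_lhopital (f g f' g' : ℝ → ℝ) (a L : ℝ) (ha : a < 1)
    (hf : ∀ x ∈ Ioo a 1, HasDerivAt f (f' x) x)
    (hg : ∀ x ∈ Ioo a 1, HasDerivAt g (g' x) x)
    (hg' : ∀ x ∈ Ioo a 1, 0 < g' x)
    (hgtop : Tendsto g (nhdsWithin 1 (Iio 1)) atTop)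
    (hdiv : Tendsto (fun x => f' x / g' x) (nhdsWithin 1 (Iio 1)) (nhds L)) :
    Tendsto (fun x => f x / g x) (nhdsWithin 1 (Iio 1)) (nhds L) := by
  rw [Metric.tendsto_nhds]
  intro ε hε
  set δ := ε / 3 with hδdef
  have hδ : 0 < δ := by positivity
  have hbasis : (nhdsWithin (1:ℝ) (Iio 1)).HasBasis (· < (1:ℝ)) (Ioo · 1) :=
    nhdsLT_basis_of_exists_lt ⟨a, ha⟩
  have hdiv' := (Metric.tendsto_nhds.mp hdiv) δ hδ
  obtain ⟨b, hb1, hb⟩ := hbasis.eventually_iff.mp hdiv'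
  set a' := max a b with ha'def
  have ha'1 : a' < 1 := max_lt ha hb1
  set x₀ := (a' + 1) / 2 with hx₀def
  have hx₀ : a' < x₀ ∧ x₀ < 1 := by constructor <;> [skip; skip] <;> simp [hx₀def] <;> linarith
  -- membership helpers
  have hmem : ∀ y, x₀ ≤ y → y < 1 → y ∈ Ioo a 1 := fun y h1 h2 =>
    ⟨lt_of_le_of_lt (le_max_left a b) (lt_of_lt_of_le hx₀.1 h1), h2⟩
  have hmemb : ∀ y, x₀ ≤ y → y < 1 → y ∈ Ioo b 1 := fun y h1 h2 =>
    ⟨lt_of_le_of_lt (le_max_right a b) (lt_of_lt_of_le hx₀.1 h1), h2⟩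
  set C₁ := f x₀ - (L + δ) * g x₀ with hC₁
  set C₂ := f x₀ - (L - δ) * g x₀ with hC₂
  have hub : ∀ x ∈ Ioo x₀ 1, f x - (L + δ) * g x ≤ C₁ := by
    intro x hx
    have hanti : AntitoneOn (fun y => f y - (L + δ) * g y) (Icc x₀ x) := by
      have hder : ∀ y ∈ interior (Icc x₀ x),
          HasDerivAt (fun y => f y - (L + δ) * g y) (f' y - (L + δ) * g' y) y := by
        intro y hy
        rw [interior_Icc] at hy
        have hy1 : y ∈ Ioo a 1 := hmem y hy.1.le (lt_trans hy.2 hx.2)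
        exact (hf y hy1).sub ((hg y hy1).const_mul (L + δ))
      apply antitoneOn_of_deriv_nonpos (convex_Icc _ _)
      · intro y hy
        have hy' : y ∈ Ioo a 1 := hmem y hy.1 (lt_of_le_of_lt hy.2 hx.2)
        exact ((hf y hy').sub ((hg y hy').const_mul (L + δ))).continuousAt.continuousWithinAt
      · intro y hy
        exact ((hder y hy).differentiableAt).differentiableWithinAt
      · intro y hy
        rw [(hder y hy).deriv]
        rw [interior_Icc] at hy
        have hy1 : y ∈ Ioo a 1 := hmem y hy.1.le (lt_trans hy.2 hx.2)
        have hdist := hb (hmemb y hy.1.le (lt_trans hy.2 hx.2))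
        rw [Real.dist_eq, abs_lt] at hdist
        have hgpos := hg' y hy1
        have : f' y < (L + δ) * g' y := by
          rw [← div_lt_iff₀ hgpos]; linarith [hdist.2]
        linarith
    have h := hanti (left_mem_Icc.mpr hx.1.le) (right_mem_Icc.mpr hx.1.le) hx.1.le
    simp only at h
    rw [hC₁]; linarith
  have hlb : ∀ x ∈ Ioo x₀ 1, C₂ ≤ f x - (L - δ) * g x := by
    intro x hx
    have hmono : MonotoneOn (fun y => f y - (L - δ) * g y) (Icc x₀ x) := by
      have hder : ∀ y ∈ interior (Icc x₀ x),
          HasDerivAt (fun y => f y - (L - δ) * g y) (f' y - (L - δ) * g' y) y := by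
        intro y hy
        rw [interior_Icc] at hy
        have hy1 : y ∈ Ioo a 1 := hmem y hy.1.le (lt_trans hy.2 hx.2)
        exact (hf y hy1).sub ((hg y hy1).const_mul (L - δ))
      apply monotoneOn_of_deriv_nonneg (convex_Icc _ _)
      · intro y hy
        have hy' : y ∈ Ioo a 1 := hmem y hy.1 (lt_of_le_of_lt hy.2 hx.2)
        exact ((hf y hy').sub ((hg y hy').const_mul (L - δ))).continuousAt.continuousWithinAt
      · intro y hy
        exact ((hder y hy).differentiableAt).differentiableWithinAt
      · intro y hy
        rw [(hder y hy).deriv]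
        rw [interior_Icc] at hy
        have hy1 : y ∈ Ioo a 1 := hmem y hy.1.le (lt_trans hy.2 hx.2)
        have hdist := hb (hmemb y hy.1.le (lt_trans hy.2 hx.2))
        rw [Real.dist_eq, abs_lt] at hdist
        have hgpos := hg' y hy1
        have : (L - δ) * g' y < f' y := by
          rw [← lt_div_iff₀ hgpos]; linarith [hdist.1]
        linarith
    have h := hmono (left_mem_Icc.mpr hx.1.le) (right_mem_Icc.mpr hx.1.le) hx.1.le
    simp only at h
    rw [hC₂]; linarith
  set K := max 1 (max (|C₁| / δ) (|C₂| / δ)) with hK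
  have hge := hgtop.eventually_ge_atTop K
  have hxev : Ioo x₀ 1 ∈ nhdsWithin (1:ℝ) (Iio 1) := hbasis.mem_of_mem hx₀.2
  filter_upwards [hge, hxev] with x hKx hx
  have hgx : (0:ℝ) < g x := lt_of_lt_of_le one_pos (le_trans (le_max_left _ _) hKx)
  have hC1 : |C₁| ≤ δ * g x := by
    have : |C₁| / δ ≤ g x := le_trans (le_trans (le_max_left _ _) (le_max_right _ _)) hKx
    rw [div_le_iff₀ hδ] at this; linarith
  have hC2 : |C₂| ≤ δ * g x := by
    have : |C₂| / δ ≤ g x := le_trans (le_trans (le_max_right _ _) (le_max_right _ _)) hKx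
    rw [div_le_iff₀ hδ] at this; linarith
  have h1 : f x / g x ≤ L + 2 * δ := by
    rw [div_le_iff₀ hgx]
    have := hub x hx
    have := le_abs_self C₁
    nlinarith
  have h2 : L - 2 * δ ≤ f x / g x := by
    rw [le_div_iff₀ hgx]
    have := hlb x hx
    have := neg_abs_le C₂
    nlinarith
  rw [Real.dist_eq, abs_lt]
  constructor <;> [linarith; linarith]

/-- With `p'(x) = exp((2λ/μ²)·1/(1−x²))` and `p(x) = ∫₀ˣ p'(y) dy`,
`lim_{x→1⁻} p(x)/(p'(x)(1−x²)²) = μ²/(4λ)`. -/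
theorem stmt12 (lam mu : ℝ) (hlam : 0 < lam) (hmu : 0 < mu) :
    Filter.Tendsto
      (fun x : ℝ =>
        (∫ y in (0 : ℝ)..x, Real.exp (2 * lam / mu ^ 2 * (1 / (1 - y ^ 2))))
          / (Real.exp (2 * lam / mu ^ 2 * (1 / (1 - x ^ 2))) * (1 - x ^ 2) ^ 2))
      (nhdsWithin 1 (Set.Iio 1)) (nhds (mu ^ 2 / (4 * lam))) := by
  set c := 2 * lam / mu ^ 2 with hcdef
  have hc : 0 < c := by positivity
  set E : ℝ → ℝ := fun y => Real.exp (c * (1 / (1 - y ^ 2))) with hEdef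
  set a : ℝ := max (1/2) (1 - c/4) with hadef
  have ha1 : a < 1 := by
    apply max_lt (by norm_num); linarith
  have hmem : ∀ x ∈ Set.Ioo a 1, (1/2 : ℝ) < x ∧ 1 - c/4 < x ∧ 0 < 1 - x ^ 2 := by
    intro x hx
    refine ⟨lt_of_le_of_lt (le_max_left _ _) hx.1, lt_of_le_of_lt (le_max_right _ _) hx.1, ?_⟩
    have h1 : (1/2 : ℝ) < x := lt_of_le_of_lt (le_max_left _ _) hx.1
    nlinarith [hx.2]
  -- continuity of E away from ±1
  have hEca : ∀ y : ℝ, 1 - y ^ 2 ≠ 0 → ContinuousAt E y := by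
    intro y hy
    apply Real.continuous_exp.continuousAt.comp
    exact continuousAt_const.mul (continuousAt_const.div (by fun_prop) hy)
  have hEpos : ∀ y, 0 < E y := fun y => Real.exp_pos _
  -- derivative of E
  have hEder : ∀ x ∈ Set.Ioo a 1, HasDerivAt E (E x * (c * (2 * x / (1 - x ^ 2) ^ 2))) x := by
    intro x hx
    have hne : 1 - x ^ 2 ≠ 0 := (hmem x hx).2.2.ne'
    have h1 : HasDerivAt (fun y : ℝ => 1 - y ^ 2) (-(2 * x)) x := by
      simpa using (hasDerivAt_pow 2 x).const_sub 1
    have h2 : HasDerivAt (fun y : ℝ => 1 / (1 - y ^ 2)) (2 * x / (1 - x ^ 2) ^ 2) x := by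
      simp only [one_div]
      convert h1.fun_inv hne using 1
      · rfl
      · rfl
      field_simp
    have h3 := (h2.const_mul c).exp
    convert h3 using 1
    try ring
  -- derivative of g
  set g : ℝ → ℝ := fun x => E x * (1 - x ^ 2) ^ 2 with hgdef
  set g' : ℝ → ℝ := fun x => E x * (2 * c * x - 4 * x * (1 - x ^ 2)) with hg'def
  have hgder : ∀ x ∈ Set.Ioo a 1, HasDerivAt g (g' x) x := by
    intro x hx
    have hne : 1 - x ^ 2 ≠ 0 := (hmem x hx).2.2.ne'
    have h1 : HasDerivAt (fun y : ℝ => 1 - y ^ 2) (-(2 * x)) x := by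
      simpa using (hasDerivAt_pow 2 x).const_sub 1
    have h4 : HasDerivAt (fun y : ℝ => (1 - y ^ 2) ^ 2)
        ((2 : ℕ) * (1 - x ^ 2) ^ 1 * (-(2 * x))) x := h1.pow 2
    have h5 := (hEder x hx).fun_mul h4
    convert h5 using 1
    · rfl
    · rfl
    simp only [hg'def, pow_one, Nat.cast_ofNat]
    field_simp
    ring
  -- positivity of g'
  have hg'pos : ∀ x ∈ Set.Ioo a 1, 0 < g' x := by
    intro x hx
    obtain ⟨h1, h2, h3⟩ := hmem x hx
    have hx1 := hx.2
    have hkey : 0 < c - 2 * (1 - x ^ 2) := by nlinarith [sq_nonneg (1 - x)]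
    have hxx : (0:ℝ) < x := by linarith
    have : 0 < 2 * c * x - 4 * x * (1 - x ^ 2) := by nlinarith [mul_pos hxx hkey]
    exact mul_pos (hEpos x) this
  -- f and its derivative (FTC)
  set f : ℝ → ℝ := fun x => ∫ y in (0 : ℝ)..x, E y with hfdef
  have hfder : ∀ x ∈ Set.Ioo a 1, HasDerivAt f (E x) x := by
    intro x hx
    obtain ⟨h1, h2, h3⟩ := hmem x hx
    have hx0 : (0:ℝ) < x := by linarith
    have hint : IntervalIntegrable E MeasureTheory.volume 0 x := by
      apply ContinuousOn.intervalIntegrable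
      intro y hy
      rw [Set.uIcc_of_le hx0.le] at hy
      have : 1 - y ^ 2 ≠ 0 := by nlinarith [hy.1, hy.2, hx.2]
      exact (hEca y this).continuousWithinAt
    have hm : Measurable E := by
      apply Real.measurable_exp.comp
      exact measurable_const.mul (measurable_const.div (by fun_prop))
    exact intervalIntegral.integral_hasDerivAt_right hint
      hm.stronglyMeasurable.stronglyMeasurableAtFilter (hEca x h3.ne')
  -- g tends to atTop
  have hgtop : Filter.Tendsto g (nhdsWithin 1 (Set.Iio 1)) Filter.atTop := by
    have htt : Filter.Tendsto (fun u : ℝ => Real.exp (c * u) / u ^ 2) Filter.atTop Filter.atTop := by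
      have h1 : Filter.Tendsto (fun u : ℝ => c * u) Filter.atTop Filter.atTop :=
        Filter.tendsto_id.const_mul_atTop hc
      have h2 := (Real.tendsto_exp_div_pow_atTop 2).comp h1
      have h3 := h2.const_mul_atTop (show (0:ℝ) < c ^ 2 by positivity)
      apply h3.congr'
      filter_upwards [Filter.eventually_gt_atTop 0] with u hu
      have : c * u ≠ 0 := by positivity
      simp only [Function.comp_apply]; field_simp
    have hinv : Filter.Tendsto (fun t : ℝ => 1 / t) (nhdsWithin 0 (Set.Ioi 0)) Filter.atTop := by
      simpa [one_div] using tendsto_inv_nhdsGT_zero (𝕜 := ℝ)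
    have hcomp : Filter.Tendsto (fun t : ℝ => Real.exp (c * (1 / t)) * t ^ 2)
        (nhdsWithin 0 (Set.Ioi 0)) Filter.atTop := by
      apply (htt.comp hinv).congr'
      filter_upwards [self_mem_nhdsWithin] with t (ht : t ∈ Set.Ioi 0)
      have ht' : (t:ℝ) ≠ 0 := (Set.mem_Ioi.mp ht).ne'
      simp only [Function.comp, one_div, inv_pow, div_inv_eq_mul]
    have hto0 : Filter.Tendsto (fun x : ℝ => 1 - x ^ 2) (nhdsWithin 1 (Set.Iio 1))
        (nhdsWithin 0 (Set.Ioi 0)) := by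
      apply tendsto_nhdsWithin_of_tendsto_nhds_of_eventually_within
      · have : Filter.Tendsto (fun x : ℝ => 1 - x ^ 2) (nhds 1) (nhds (1 - 1 ^ 2)) :=
          (continuous_const.sub (continuous_pow 2)).tendsto 1
        simpa using this.mono_left nhdsWithin_le_nhds
      · have : Set.Ioo a 1 ∈ nhdsWithin (1:ℝ) (Set.Iio 1) :=
          (nhdsLT_basis_of_exists_lt ⟨a, ha1⟩).mem_of_mem ha1
        filter_upwards [this] with x hx
        exact (hmem x hx).2.2
    have := hcomp.comp hto0
    apply this.congr
    intro x
    simp [Function.comp, hgdef, hEdef, one_div]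
  -- limit of f'/g'
  have hL : mu ^ 2 / (4 * lam) = 1 / (2 * c) := by
    rw [hcdef]; field_simp; ring
  have hdiv : Filter.Tendsto (fun x => E x / g' x) (nhdsWithin 1 (Set.Iio 1))
      (nhds (mu ^ 2 / (4 * lam))) := by
    rw [hL]
    have hcont : Filter.Tendsto (fun x : ℝ => 1 / (2 * c * x - 4 * x * (1 - x ^ 2)))
        (nhdsWithin 1 (Set.Iio 1)) (nhds (1 / (2 * c))) := by
      have h2c : (2 * c * 1 - 4 * 1 * (1 - 1 ^ 2) : ℝ) = 2 * c := by ring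
      have : ContinuousAt (fun x : ℝ => 1 / (2 * c * x - 4 * x * (1 - x ^ 2))) 1 := by
        apply continuousAt_const.div (by fun_prop)
        rw [h2c]; positivity
      have h6 := this.tendsto.mono_left (nhdsWithin_le_nhds (s := Set.Iio 1))
      simpa [h2c] using h6
    apply hcont.congr'
    have hmemev : Set.Ioo a 1 ∈ nhdsWithin (1:ℝ) (Set.Iio 1) :=
      (nhdsLT_basis_of_exists_lt ⟨a, ha1⟩).mem_of_mem ha1
    filter_upwards [hmemev] with x hx
    have hE0 : E x ≠ 0 := (hEpos x).ne'
    have hD : 2 * c * x - 4 * x * (1 - x ^ 2) ≠ 0 := by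
      have := hg'pos x hx
      simp only [hg'def] at this
      intro h; rw [h] at this; simp at this
    simp only [hg'def]
    field_simp
  have := my_lhopital f g E g' a (mu ^ 2 / (4 * lam)) ha1 hfder hgder hg'pos hgtop hdiv
  exact this
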